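/- Let 2N > 6 be an even integer, let P_1 denote the smallest prime of type P relative to 2N (which exists), and let a be any integer of type P relative to 2N. Then a ≤ 2N − P_1; that is, 2N − P_1 is the greatest integer of type P relative to 2N. -/

import Mathlib

/-- `p` is a prime of type P relative to the even integer `n = 2N`:
`p` is prime, `3 ≤ p < n - 2`, and `p` does not divide `n`. -/
def PrimeTypeP (n p : ℕ) : Prop :=
  p.Prime ∧ 3 ≤ p ∧ p < n - 2 ∧ ¬ p ∣ n

/-- `a` is an integer of type P relative to the even integer `n = 2N`:
`1 < a < n - 2` and every prime factor of `a` is a prime of type P relative to `n`. -/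
def IntTypeP (n a : ℕ) : Prop :=
  1 < a ∧ a < n - 2 ∧ ∀ p : ℕ, p.Prime → p ∣ a → PrimeTypeP n p

/-- For even `n > 6`, some prime of type P relative to `n` exists. -/
lemma exists_primeTypeP (n : ℕ) (hn : Even n) (h6 : 6 < n) : ∃ p, PrimeTypeP n p := by
  obtain ⟨N, hN⟩ := hn
  have hn8 : 8 ≤ n := by omega
  by_cases h3 : 3 ∣ n
  · -- then 6 ∣ n, so n ≥ 12; use Bertrand's postulate
    have h2 : 2 ∣ n := ⟨N, by omega⟩
    have h6d : 6 ∣ n := Nat.Coprime.mul_dvd_of_dvd_of_dvd (by norm_num) h2 h3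
    have hn12 : 12 ≤ n := by
      obtain ⟨c, hc⟩ := h6d; omega
    have hk : N - 2 ≠ 0 := by omega
    obtain ⟨q, hq, hq1, hq2⟩ := Nat.exists_prime_lt_and_le_two_mul (N - 2) hk
    by_cases hqn : q ∣ n
    · exfalso
      have hqodd : ¬ 2 ∣ q := by
        intro h2q
        have := (Nat.prime_dvd_prime_iff_eq Nat.prime_two hq).mp h2q
        omega
      obtain ⟨m, hm⟩ := hqn
      have hm2 : 2 ∣ m := by
        rcases (Nat.Prime.dvd_mul Nat.prime_two).mp (hm ▸ h2) with h | h
        · exact absurd h hqodd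
        · exact h
      obtain ⟨t, ht⟩ := hm2
      subst ht
      rcases Nat.lt_or_ge t 2 with htlt | htge
      · interval_cases t
        · norm_num at hm; omega
        · -- n = 2q, and 3 ∣ 2q → q = 3, but q ≥ N - 1 ≥ 5
          norm_num at hm
          have hn2q : 2 * q = n := by omega
          have h3q : 3 ∣ q := by
            rcases (Nat.Prime.dvd_mul (by norm_num : Nat.Prime 3)).mp
              (hn2q ▸ h3) with h | h
            · exact absurd h (by norm_num)
            · exact h
          have := (Nat.prime_dvd_prime_iff_eq (by norm_num) hq).mp h3q
          omega
      · have hqm : q * 4 ≤ q * (2 * t) := Nat.mul_le_mul_left q (by omega)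
        rw [← hm] at hqm
        omega
    · exact ⟨q, hq, by omega, by omega, hqn⟩
  · exact ⟨3, by norm_num, le_refl 3, by omega, h3⟩

/-- For even `2N > 6`, the smallest prime `P₁` of type P relative to `2N` exists, and
every integer `a` of type P relative to `2N` satisfies `a ≤ 2N - P₁`;
that is, `2N - P₁` is the greatest integer of type P relative to `2N`. -/
theorem stmt_2 (n : ℕ) (hn : Even n) (h6 : 6 < n) :
    ∃ P₁ : ℕ, PrimeTypeP n P₁ ∧ (∀ p : ℕ, PrimeTypeP n p → P₁ ≤ p) ∧
      ∀ a : ℕ, IntTypeP n a → a ≤ n - P₁ := by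
  classical
  have hex : ∃ p, PrimeTypeP n p := exists_primeTypeP n hn h6
  refine ⟨Nat.find hex, Nat.find_spec hex, fun p hp => Nat.find_min' hex hp, ?_⟩
  set P₁ := Nat.find hex with hP₁
  obtain ⟨hP₁p, hP₁3, hP₁lt, hP₁n⟩ := Nat.find_spec hex
  rintro a ⟨ha1, ha2, ha3⟩
  by_contra hcon
  push_neg at hcon
  -- a is odd, since all of its prime factors are ≥ 3
  have haodd : Odd a := by
    rw [← Nat.not_even_iff_odd]
    intro hae
    have h2a : (2 : ℕ) ∣ a := hae.two_dvd
    have := (ha3 2 Nat.prime_two h2a).2.1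
    omega
  have han : a < n := by omega
  -- d := n - a is odd, 3 ≤ d < P₁
  set d := n - a with hd
  have hdodd : Odd d := Nat.Even.sub_odd han.le hn haodd
  have hd3 : 3 ≤ d := by
    obtain ⟨k, hk⟩ := hdodd; omega
  have hdP : d < P₁ := by omega
  set p := d.minFac with hp
  have hpp : p.Prime := Nat.minFac_prime (by omega)
  have hpd : p ∣ d := Nat.minFac_dvd d
  have hp2 : p ≠ 2 := by
    intro h
    have h2d : (2 : ℕ) ∣ d := h ▸ hpd
    obtain ⟨k, hk⟩ := h2d
    obtain ⟨j, hj⟩ := hdodd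
    omega
  have hp3 : 3 ≤ p := by
    have := hpp.two_le; omega
  have hpP : p < P₁ := lt_of_le_of_lt (Nat.minFac_le (by omega)) hdP
  -- by minimality of P₁, p is not of type P, hence p ∣ n
  have hnotP : ¬ PrimeTypeP n p := fun h => absurd (Nat.find_min' hex h) (by omega)
  have hpn : p ∣ n := by
    by_contra hpn
    exact hnotP ⟨hpp, hp3, by omega, hpn⟩
  -- then p divides a = n - d, contradicting that a is of type P
  have hpa : p ∣ a := by
    have hane : a = n - d := by omega
    rw [hane]
    exact Nat.dvd_sub hpn hpd
  exact (ha3 p hpp hpa).2.2.2 hpn
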